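/- Let A be a Banach algebra possessing a bounded left approximate identity, let d : A → A be a derivation, and let δ : A → A be a d-derivation (a linear map with δ(xa) = δ(x)a + x d(a) for all x, a ∈ A). Then δ is bounded if and only if d is bounded. -/

import Mathlib

set_option maxHeartbeats 2000000

open Filter Topology Unitization

namespace DDerivAux

variable {A : Type*} [NonUnitalNormedRing A] [NormedSpace ℂ A]
    [IsScalarTower ℂ A A] [SMulCommClass ℂ A A]

abbrev RR (A : Type*) [NonUnitalNormedRing A] [NormedSpace ℂ A]
    [IsScalarTower ℂ A A] [SMulCommClass ℂ A A] : Type _ := WithLp 1 (Unitization ℂ A)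

noncomputable def fstR (x : RR A) : ℂ := (WithLp.equiv 1 (Unitization ℂ A) x).fst
noncomputable def sndR (x : RR A) : A := (WithLp.equiv 1 (Unitization ℂ A) x).snd
noncomputable def inrR (a : A) : RR A := (WithLp.equiv 1 (Unitization ℂ A)).symm (inr a)

lemma norm_eR (x : RR A) : ‖x‖ = ‖fstR x‖ + ‖sndR x‖ := WithLp.unitization_norm_def x

lemma fstR_mul (x y : RR A) : fstR (x * y) = fstR x * fstR y := by
  simp [fstR, Unitization.fst_mul]

lemma sndR_mul (x y : RR A) : sndR (x * y) = fstR x • sndR y + fstR y • sndR x + sndR x * sndR y := by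
  simp [fstR, sndR, Unitization.snd_mul]

lemma fstR_one : fstR (1 : RR A) = 1 := rfl
lemma sndR_one : sndR (1 : RR A) = 0 := rfl
lemma fstR_add (x y : RR A) : fstR (x + y) = fstR x + fstR y := rfl
lemma sndR_add (x y : RR A) : sndR (x + y) = sndR x + sndR y := rfl
lemma fstR_sub (x y : RR A) : fstR (x - y) = fstR x - fstR y := rfl
lemma sndR_sub (x y : RR A) : sndR (x - y) = sndR x - sndR y := rfl
lemma fstR_smul (c : ℂ) (x : RR A) : fstR (c • x) = c * fstR x := rfl
lemma sndR_smul (c : ℂ) (x : RR A) : sndR (c • x) = c • sndR x := rfl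
lemma fstR_inrR (a : A) : fstR (inrR a : RR A) = 0 := by simp [fstR, inrR]
lemma sndR_inrR (a : A) : sndR (inrR a : RR A) = a := by simp [sndR, inrR]
lemma extR {x y : RR A} (h1 : fstR x = fstR y) (h2 : sndR x = sndR y) : x = y :=
  (WithLp.equiv 1 (Unitization ℂ A)).injective (Unitization.ext h1 h2)
lemma inrR_mul (a b : A) : (inrR a : RR A) * inrR b = inrR (a * b) := by
  apply extR <;> simp [fstR_mul, sndR_mul, fstR_inrR, sndR_inrR]
lemma smul_inrR (c : ℂ) (a : A) : c • (inrR a : RR A) = inrR (c • a) := by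
  apply extR
  · simp [fstR_smul, fstR_inrR]
  · simp [sndR_smul, sndR_inrR]
lemma inrR_sub (a b : A) : (inrR a : RR A) - inrR b = inrR (a - b) := by
  apply extR
  · rw [fstR_sub, fstR_inrR, fstR_inrR, sub_zero, fstR_inrR]
  · rw [sndR_sub, sndR_inrR, sndR_inrR, sndR_inrR]

lemma norm_one_R : ‖(1 : RR A)‖ = 1 := by
  rw [norm_eR, fstR_one, sndR_one]; simp

lemma norm_inrR (a : A) : ‖(inrR a : RR A)‖ = ‖a‖ := by
  rw [norm_eR, fstR_inrR, sndR_inrR]; simp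

lemma norm_fstR_le (x : RR A) : ‖fstR x‖ ≤ ‖x‖ := by
  rw [norm_eR]; linarith [norm_nonneg (sndR x)]
lemma norm_sndR_le (x : RR A) : ‖sndR x‖ ≤ ‖x‖ := by
  rw [norm_eR]; linarith [norm_nonneg (fstR x)]

lemma sndR_mul_inrR (x : RR A) (a : A) : sndR (x * inrR a) = fstR x • a + sndR x * a := by
  rw [sndR_mul, fstR_inrR, sndR_inrR]; simp

lemma sndR_inrR_mul (a : A) (x : RR A) : sndR (inrR a * x) = fstR x • a + a * sndR x := by
  rw [sndR_mul, fstR_inrR, sndR_inrR]; simp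

lemma fstR_mul_inrR (x : RR A) (a : A) : fstR (x * inrR a) = 0 := by
  rw [fstR_mul, fstR_inrR, mul_zero]

lemma mul_inrR_eq (x : RR A) (a : A) : x * inrR a = inrR (fstR x • a + sndR x * a) := by
  apply extR
  · rw [fstR_mul_inrR, fstR_inrR]
  · rw [sndR_mul_inrR, sndR_inrR]

section Main

variable [CompleteSpace A]

lemma exists_good_e {ι : Type*} (l : Filter ι) [l.NeBot] (e : ι → A) {C : ℝ} (hC : 1 ≤ C)
    (he : ∀ i, ‖e i‖ ≤ C) (happrox : ∀ a : A, Tendsto (fun i => e i * a) l (nhds a))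
    (c : A) (v : ℕ → A) (hv : Tendsto v atTop (nhds 0)) {ε : ℝ} (hε : 0 < ε) :
    ∃ i, ‖e i * c - c‖ < ε ∧ ∀ k, ‖e i * v k - v k‖ < ε := by
  have hC1 : (0:ℝ) < C + 1 := by linarith
  have htail : ∀ᶠ k in atTop, ‖v k‖ < ε / (C + 1) := by
    have := hv.eventually (Metric.ball_mem_nhds (0:A) (div_pos hε hC1))
    simpa [mem_ball_zero_iff] using this
  obtain ⟨N, hN⟩ := eventually_atTop.mp htail
  have h1 : ∀ᶠ i in l, ‖e i * c - c‖ < ε := by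
    have := (happrox c).eventually (Metric.ball_mem_nhds c hε)
    simpa [dist_eq_norm] using this
  have h2 : ∀ᶠ i in l, ∀ k ∈ Set.Iio N, ‖e i * v k - v k‖ < ε := by
    rw [Filter.eventually_all_finite (Set.finite_Iio N)]
    intro k _
    have := (happrox (v k)).eventually (Metric.ball_mem_nhds (v k) hε)
    simpa [dist_eq_norm] using this
  obtain ⟨i, hi1, hi2⟩ := (h1.and h2).exists
  refine ⟨i, hi1, fun k => ?_⟩
  by_cases hk : k < N
  · exact hi2 k hk
  · push_neg at hk
    have hvk := hN k hk
    calc ‖e i * v k - v k‖ ≤ ‖e i * v k‖ + ‖v k‖ := norm_sub_le _ _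
      _ ≤ ‖e i‖ * ‖v k‖ + ‖v k‖ := by gcongr; exact norm_mul_le _ _
      _ ≤ C * ‖v k‖ + ‖v k‖ := by gcongr; exact he i
      _ = (C + 1) * ‖v k‖ := by ring
      _ < (C + 1) * (ε / (C+1)) := by gcongr
      _ = ε := by field_simp

lemma step_lemma {ι : Type*} (l : Filter ι) [l.NeBot] (e : ι → A) {C : ℝ} (hC : 1 ≤ C)
    (he : ∀ i, ‖e i‖ ≤ C) (happrox : ∀ a : A, Tendsto (fun i => e i * a) l (nhds a))
    (u : ℕ → A) (hu : Tendsto u atTop (nhds 0))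
    {t : ℝ} (ht : t = (2*(1+C))⁻¹)
    (n : ℕ) (B : (RR A)ˣ) (h1 : fstR (B : RR A) = (((1-t)^n : ℝ) : ℂ))
    (h2 : ‖((B⁻¹ : (RR A)ˣ) : RR A)‖ ≤ 4^n) :
    ∃ B' : (RR A)ˣ,
      (fstR (B' : RR A) = (((1-t)^(n+1) : ℝ) : ℂ)) ∧
      (‖((B'⁻¹ : (RR A)ˣ) : RR A)‖ ≤ 4^(n+1)) ∧
      (∀ k, ‖sndR (((B'⁻¹ : (RR A)ˣ) : RR A) * inrR (u k))
              - sndR (((B⁻¹ : (RR A)ˣ) : RR A) * inrR (u k))‖ ≤ (2⁻¹:ℝ)^(n+1)) ∧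
      ‖(B' : RR A) - (B : RR A)‖ ≤ (1+C) * (1-t)^n := by
  -- basic facts about t
  have hCpos : (0:ℝ) < 1 + C := by linarith
  have htpos : 0 < t := by rw [ht]; positivity
  have ht4 : t ≤ 1/4 := by
    rw [ht]
    rw [inv_le_comm₀ (by positivity) (by norm_num)]
    linarith
  have ht1C : t * (1 + C) = 1/2 := by rw [ht]; field_simp
  have h1t : (0:ℝ) < 1 - t := by linarith
  have h1tle : (1:ℝ) - t ≤ 1 := by linarith
  have hpowpos : (0:ℝ) < (1-t)^n := pow_pos h1t n
  have hpowle : ((1:ℝ)-t)^n ≤ 1 := pow_le_one₀ (le_of_lt h1t) h1tle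
  set lam : ℝ := ((1-t)^n)⁻¹ with hlam
  have hlampos : 0 < lam := by positivity
  -- fst of B⁻¹
  set Bi := ((B⁻¹ : (RR A)ˣ) : RR A) with hBidef
  have hBi_fst : fstR Bi = ((lam : ℝ) : ℂ) := by
    have h0 : fstR ((B : RR A) * Bi) = 1 := by
      rw [Units.mul_inv]; exact fstR_one
    rw [fstR_mul, h1] at h0
    have hne : (((1-t)^n : ℝ) : ℂ) ≠ 0 := by
      simp only [ne_eq, Complex.ofReal_eq_zero]
      exact ne_of_gt hpowpos
    have h3 : fstR Bi = (((1-t)^n : ℝ) : ℂ)⁻¹ := eq_inv_of_mul_eq_one_right h0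
    rw [h3, hlam, Complex.ofReal_inv]
  have hlamnorm : ‖fstR Bi‖ = lam := by
    rw [hBi_fst]
    rw [Complex.norm_real]
    exact abs_of_pos hlampos
  have hlammul : (1-t)^n * lam = 1 := by
    rw [hlam]; field_simp
  -- the sequence v
  set v : ℕ → A := fun k => fstR Bi • u k + sndR Bi * u k with hvdef
  have hBiu : ∀ k, Bi * inrR (u k) = inrR (v k) := fun k => mul_inrR_eq Bi (u k)
  have hv : Tendsto v atTop (nhds 0) := by
    have t1 : Tendsto (fun k => fstR Bi • u k) atTop (nhds (fstR Bi • (0:A))) := hu.const_smul _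
    have t2 : Tendsto (fun k => sndR Bi * u k) atTop (nhds (sndR Bi * 0)) :=
      ((continuous_mul_left (sndR Bi)).tendsto 0).comp hu
    simpa using t1.add t2
  set δ' : ℝ := min 1 ((2⁻¹:ℝ)^(n+1) * (4⁻¹:ℝ)^(n+1)) with hddef
  have hδpos : 0 < δ' := lt_min (by norm_num) (by positivity)
  have hδ1 : δ' ≤ 1 := min_le_left _ _
  have hδ2 : δ' ≤ (2⁻¹:ℝ)^(n+1) * (4⁻¹:ℝ)^(n+1) := min_le_right _ _
  obtain ⟨i, hic, hiv⟩ := exists_good_e l e hC he happrox (sndR Bi) v hv hδpos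
  set c : ℂ := ((t*(1-t)^n : ℝ) : ℂ) with hcdef
  have hcnorm : ‖c‖ = t * (1-t)^n := by
    rw [hcdef]
    rw [Complex.norm_real]
    exact abs_of_pos (by positivity)
  set s : RR A := c • ((1 - inrR (e i)) * Bi) with hsdef
  have hfste : fstR ((1 - inrR (e i)) * Bi) = fstR Bi := by
    rw [fstR_mul, fstR_sub, fstR_one, fstR_inrR, sub_zero, one_mul]
  have hsnde : sndR ((1 - inrR (e i)) * Bi) = sndR Bi - (fstR Bi • e i + e i * sndR Bi) := by
    have h6 : (1 - inrR (e i)) * Bi = Bi - inrR (e i) * Bi := by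
      rw [sub_mul, one_mul]
    rw [h6, sndR_sub, sndR_inrR_mul]
  have hnorm1e : ‖(1 - inrR (e i)) * Bi‖ ≤ lam * (1 + C) + δ' := by
    rw [norm_eR, hfste, hsnde, hlamnorm]
    have h7 : sndR Bi - (fstR Bi • e i + e i * sndR Bi)
        = (sndR Bi - e i * sndR Bi) - fstR Bi • e i := by abel
    have h8 : ‖sndR Bi - (fstR Bi • e i + e i * sndR Bi)‖ ≤ δ' + lam * C := by
      rw [h7]
      refine (norm_sub_le _ _).trans ?_
      have h9 : ‖sndR Bi - e i * sndR Bi‖ < δ' := by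
        rw [norm_sub_rev]; exact hic
      have h10 : ‖fstR Bi • e i‖ ≤ lam * C := by
        rw [norm_smul, hlamnorm]
        exact mul_le_mul_of_nonneg_left (he i) (le_of_lt hlampos)
      linarith
    linarith
  have hsnorm : ‖s‖ ≤ 3/4 := by
    rw [hsdef, norm_smul, hcnorm]
    calc t * (1-t)^n * ‖(1 - inrR (e i)) * Bi‖
        ≤ t * (1-t)^n * (lam * (1 + C) + δ') := by
          exact mul_le_mul_of_nonneg_left hnorm1e (by positivity)
      _ = t * (1+C) * ((1-t)^n * lam) + t * (1-t)^n * δ' := by ring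
      _ = 1/2 + t * (1-t)^n * δ' := by rw [hlammul, ht1C]; ring
      _ ≤ 1/2 + 1/4 := by
          have : t * (1-t)^n * δ' ≤ 1/4 := by
            calc t * (1-t)^n * δ' ≤ (1/4) * 1 * 1 := by
                  apply mul_le_mul (mul_le_mul ht4 hpowle (le_of_lt hpowpos) (by norm_num))
                    hδ1 (le_of_lt hδpos) (by norm_num)
              _ = 1/4 := by ring
          linarith
      _ = 3/4 := by norm_num
  have hslt : ‖s‖ < 1 := lt_of_le_of_lt hsnorm (by norm_num)
  set un : (RR A)ˣ := Units.oneSub s hslt with hundef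
  have hunval : (un : RR A) = 1 - s := rfl
  have hsB : s * (B : RR A) = c • (1 - inrR (e i)) := by
    rw [hsdef, smul_mul_assoc, mul_assoc, hBidef, Units.inv_mul, mul_one]
  have hval : ((un * B : (RR A)ˣ) : RR A) = (B : RR A) + c • (inrR (e i) - 1) := by
    rw [Units.val_mul, hunval, sub_mul, one_mul, hsB]
    rw [sub_eq_add_neg, ← smul_neg, neg_sub]
  have hginv : ((un⁻¹ : (RR A)ˣ) : RR A) * (1 - s) = 1 := by
    rw [← hunval, Units.inv_mul]
  have hgeq : ((un⁻¹ : (RR A)ˣ) : RR A) = 1 + ((un⁻¹ : (RR A)ˣ) : RR A) * s := by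
    have := hginv
    rw [mul_sub, mul_one] at this
    have h11 := congrArg (fun z => z + ((un⁻¹ : (RR A)ˣ) : RR A) * s) this
    simpa using h11
  have hgnorm : ‖((un⁻¹ : (RR A)ˣ) : RR A)‖ ≤ 4 := by
    have h12 : ‖((un⁻¹ : (RR A)ˣ) : RR A)‖ ≤ 1 + ‖((un⁻¹ : (RR A)ˣ) : RR A)‖ * (3/4) := by
      calc ‖((un⁻¹ : (RR A)ˣ) : RR A)‖
          = ‖1 + ((un⁻¹ : (RR A)ˣ) : RR A) * s‖ := by rw [← hgeq]
        _ ≤ ‖(1 : RR A)‖ + ‖((un⁻¹ : (RR A)ˣ) : RR A) * s‖ := norm_add_le _ _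
        _ ≤ 1 + ‖((un⁻¹ : (RR A)ˣ) : RR A)‖ * ‖s‖ := by
            rw [norm_one_R]; gcongr; exact norm_mul_le _ _
        _ ≤ 1 + ‖((un⁻¹ : (RR A)ˣ) : RR A)‖ * (3/4) := by gcongr
    linarith
  have hb'norm : ‖(((un * B)⁻¹ : (RR A)ˣ) : RR A)‖ ≤ 4^(n+1) := by
    rw [mul_inv_rev, Units.val_mul]
    calc ‖((B⁻¹ : (RR A)ˣ) : RR A) * ((un⁻¹ : (RR A)ˣ) : RR A)‖
        ≤ ‖((B⁻¹ : (RR A)ˣ) : RR A)‖ * ‖((un⁻¹ : (RR A)ˣ) : RR A)‖ := norm_mul_le _ _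
      _ ≤ 4^n * 4 := mul_le_mul h2 hgnorm (norm_nonneg _) (by positivity)
      _ = 4^(n+1) := by ring
  refine ⟨un * B, ?_, hb'norm, ?_, ?_⟩
  · -- fst
    rw [hval, fstR_add, h1, fstR_smul, fstR_sub, fstR_inrR, fstR_one]
    rw [hcdef]
    push_cast
    ring
  · -- the y-difference bound
    intro k
    have hBinv' : (((un * B)⁻¹ : (RR A)ˣ) : RR A) = Bi * ((un⁻¹ : (RR A)ˣ) : RR A) := by
      rw [mul_inv_rev, Units.val_mul, hBidef]
    have huninv : ((un⁻¹ : (RR A)ˣ) : RR A) - 1 = ((un⁻¹ : (RR A)ˣ) : RR A) * s := by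
      have h13 : ((un⁻¹ : (RR A)ˣ) : RR A) * (1 - (un : RR A))
          = ((un⁻¹ : (RR A)ˣ) : RR A) - 1 := by
        rw [mul_sub, mul_one, Units.inv_mul]
      rw [← h13, hunval]
      congr 1
      abel
    have hdiffinv : (((un * B)⁻¹ : (RR A)ˣ) : RR A) - Bi
        = (((un * B)⁻¹ : (RR A)ˣ) : RR A) * s := by
      rw [hBinv']
      calc Bi * ((un⁻¹ : (RR A)ˣ) : RR A) - Bi
          = Bi * (((un⁻¹ : (RR A)ˣ) : RR A) - 1) := by rw [mul_sub, mul_one]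
        _ = Bi * (((un⁻¹ : (RR A)ˣ) : RR A) * s) := by rw [huninv]
        _ = Bi * ((un⁻¹ : (RR A)ˣ) : RR A) * s := by rw [mul_assoc]
    have hsu : s * inrR (u k) = inrR (c • (v k - e i * v k)) := by
      rw [hsdef, smul_mul_assoc, mul_assoc, hBiu k]
      rw [sub_mul, one_mul, inrR_mul, inrR_sub, smul_inrR]
    have hkey : sndR ((((un * B)⁻¹ : (RR A)ˣ) : RR A) * inrR (u k)) - sndR (Bi * inrR (u k))
        = sndR ((((un * B)⁻¹ : (RR A)ˣ) : RR A) * inrR (c • (v k - e i * v k))) := by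
      rw [← sndR_sub, ← sub_mul, hdiffinv, mul_assoc, hsu]
    rw [hBidef] at hkey
    rw [hkey]
    have hb1 : ‖(((un * B)⁻¹ : (RR A)ˣ) : RR A)‖ ≤ 4^(n+1) := hb'norm
    calc ‖sndR ((((un * B)⁻¹ : (RR A)ˣ) : RR A) * inrR (c • (v k - e i * v k)))‖
        ≤ ‖(((un * B)⁻¹ : (RR A)ˣ) : RR A) * inrR (c • (v k - e i * v k))‖ := norm_sndR_le _
      _ ≤ ‖(((un * B)⁻¹ : (RR A)ˣ) : RR A)‖ * ‖(inrR (c • (v k - e i * v k)) : RR A)‖ :=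
          norm_mul_le _ _
      _ ≤ 4^(n+1) * (t * (1-t)^n * δ') := by
          apply mul_le_mul hb1 ?_ (norm_nonneg _) (by positivity)
          rw [norm_inrR, norm_smul, hcnorm]
          have h14 : ‖v k - e i * v k‖ ≤ δ' := by
            rw [norm_sub_rev]; exact le_of_lt (hiv k)
          exact mul_le_mul_of_nonneg_left h14 (by positivity)
      _ ≤ (2⁻¹:ℝ)^(n+1) := by
          have h15 : t * (1-t)^n * δ' ≤ δ' := by
            have : t * (1-t)^n ≤ 1 := by nlinarith
            nlinarith
          calc (4:ℝ)^(n+1) * (t * (1-t)^n * δ') ≤ 4^(n+1) * δ' := by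
                exact mul_le_mul_of_nonneg_left h15 (by positivity)
            _ ≤ 4^(n+1) * ((2⁻¹:ℝ)^(n+1) * (4⁻¹:ℝ)^(n+1)) := by
                exact mul_le_mul_of_nonneg_left hδ2 (by positivity)
            _ = (2⁻¹:ℝ)^(n+1) * (4^(n+1) * (4⁻¹:ℝ)^(n+1)) := by ring
            _ = (2⁻¹:ℝ)^(n+1) := by
                rw [← mul_pow]
                norm_num
  · -- Cauchy bound
    rw [hval]
    have h16 : (B : RR A) + c • (inrR (e i) - 1) - (B : RR A) = c • (inrR (e i) - 1) := by abel
    rw [h16, norm_smul, hcnorm]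
    have h17 : ‖(inrR (e i) - 1 : RR A)‖ ≤ C + 1 := by
      refine (norm_sub_le _ _).trans ?_
      rw [norm_inrR, norm_one_R]
      linarith [he i]
    calc t * (1-t)^n * ‖(inrR (e i) - 1 : RR A)‖ ≤ 1 * (1-t)^n * (C+1) := by
          apply mul_le_mul ?_ h17 (norm_nonneg _) (by positivity)
          apply mul_le_mul_of_nonneg_right ?_ (le_of_lt hpowpos)
          linarith
      _ = (1+C) * (1-t)^n := by ring

lemma cohen_factorization {ι : Type*} (l : Filter ι) [l.NeBot] (e : ι → A) {C : ℝ} (hC : 1 ≤ C)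
    (he : ∀ i, ‖e i‖ ≤ C) (happrox : ∀ a : A, Tendsto (fun i => e i * a) l (nhds a))
    (u : ℕ → A) (hu : Tendsto u atTop (nhds 0)) :
    ∃ a : A, ∃ w : ℕ → A, (∀ k, u k = a * w k) ∧ Tendsto w atTop (nhds 0) := by
  set t : ℝ := (2*(1+C))⁻¹ with ht
  have htpos : 0 < t := by rw [ht]; positivity
  have ht1 : t < 1 := by
    rw [ht]
    rw [inv_lt_one_iff₀]
    right; linarith
  have h1t0 : 0 < 1 - t := by linarith
  have h1t1 : 1 - t < 1 := by linarith
  choose! B' hB1 hB2 hB3 hB4 using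
    fun n B h1 h2 => step_lemma l e hC he happrox u hu ht n B h1 h2
  set F : ℕ → (RR A)ˣ := fun n => Nat.rec 1 (fun n Bn => B' n Bn) n with hFdef
  have hFs : ∀ n, F (n+1) = B' n (F n) := fun n => rfl
  have hinv : ∀ n, fstR ((F n : RR A)) = (((1-t)^n : ℝ) : ℂ)
      ∧ ‖(((F n)⁻¹ : (RR A)ˣ) : RR A)‖ ≤ 4^n := by
    intro n
    induction n with
    | zero =>
      constructor
      · show fstR ((1 : (RR A)ˣ) : RR A) = _
        rw [Units.val_one, fstR_one]; norm_num
      · show ‖(((1 : (RR A)ˣ)⁻¹ : (RR A)ˣ) : RR A)‖ ≤ _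
        rw [inv_one, Units.val_one, norm_one_R]; norm_num
    | succ n ih =>
      rw [hFs n]
      exact ⟨hB1 n (F n) ih.1 ih.2, hB2 n (F n) ih.1 ih.2⟩
  -- the approximate solutions
  set y : ℕ → ℕ → A :=
    fun n k => fstR (((F n)⁻¹ : (RR A)ˣ) : RR A) • u k
      + sndR (((F n)⁻¹ : (RR A)ˣ) : RR A) * u k with hydef
  have hyeq : ∀ n k, sndR ((((F n)⁻¹ : (RR A)ˣ) : RR A) * inrR (u k)) = y n k :=
    fun n k => sndR_mul_inrR _ _
  have hy : ∀ n k, ‖y (n+1) k - y n k‖ ≤ (2⁻¹:ℝ)^(n+1) := by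
    intro n k
    have h := hB3 n (F n) (hinv n).1 (hinv n).2 k
    rw [← hFs n] at h
    rw [hyeq (n+1) k, hyeq n k] at h
    exact h
  have hycau : ∀ k, CauchySeq (fun n => y n k) := by
    intro k
    apply cauchySeq_of_le_geometric (2⁻¹:ℝ) (2⁻¹:ℝ) (by norm_num)
    intro n
    rw [dist_eq_norm, norm_sub_rev]
    calc ‖y (n+1) k - y n k‖ ≤ (2⁻¹:ℝ)^(n+1) := hy n k
      _ = 2⁻¹ * 2⁻¹^n := by ring
  have hwex : ∀ k, ∃ wk : A, Tendsto (fun n => y n k) atTop (nhds wk) :=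
    fun k => cauchySeq_tendsto_of_complete (hycau k)
  choose w hw using hwex
  have hwdist : ∀ n k, dist (y n k) (w k) ≤ (2⁻¹:ℝ)^n := by
    intro n k
    have := dist_le_of_le_geometric_of_tendsto (2⁻¹:ℝ) (2⁻¹:ℝ) (by norm_num)
      (f := fun n => y n k) ?_ (hw k) n
    · calc dist (y n k) (w k) ≤ 2⁻¹ * 2⁻¹^n / (1 - 2⁻¹) := this
        _ = (2⁻¹:ℝ)^n := by norm_num
    · intro m
      rw [dist_eq_norm, norm_sub_rev]
      calc ‖y (m+1) k - y m k‖ ≤ (2⁻¹:ℝ)^(m+1) := hy m k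
        _ = 2⁻¹ * 2⁻¹^m := by ring
  -- the sequence of algebra parts
  set g : ℕ → A := fun n => sndR ((F n : RR A)) with hgdef
  have hgdiff : ∀ n, ‖g (n+1) - g n‖ ≤ (1+C) * (1-t)^n := by
    intro n
    have h := hB4 n (F n) (hinv n).1 (hinv n).2
    rw [← hFs n] at h
    calc ‖g (n+1) - g n‖ = ‖sndR ((F (n+1) : RR A) - (F n : RR A))‖ := by rw [sndR_sub]
      _ ≤ ‖(F (n+1) : RR A) - (F n : RR A)‖ := norm_sndR_le _
      _ ≤ (1+C) * (1-t)^n := h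
  have hgcau : CauchySeq g := by
    apply cauchySeq_of_le_geometric (1-t) (1+C) h1t1
    intro n
    rw [dist_eq_norm, norm_sub_rev]
    exact hgdiff n
  obtain ⟨a, ha⟩ := cauchySeq_tendsto_of_complete hgcau
  refine ⟨a, w, fun k => ?_, ?_⟩
  · -- u k = a * w k
    have key : ∀ n, u k = (((1-t)^n : ℝ) : ℂ) • y n k + g n * y n k := by
      intro n
      have e1 : (((F n)⁻¹ : (RR A)ˣ) : RR A) * inrR (u k) = inrR (y n k) := by
        rw [mul_inrR_eq]
      have e2 : (F n : RR A) * ((((F n)⁻¹ : (RR A)ˣ) : RR A) * inrR (u k)) = inrR (u k) := by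
        rw [← mul_assoc, Units.mul_inv, one_mul]
      have e3 : inrR (u k) = (F n : RR A) * inrR (y n k) := by rw [← e1, e2]
      have e4 := congrArg sndR e3
      rw [sndR_inrR, sndR_mul_inrR, (hinv n).1] at e4
      exact e4
    have lim1 : Tendsto (fun n => (((1-t)^n : ℝ) : ℂ) • y n k + g n * y n k) atTop
        (nhds ((0:ℂ) • w k + a * w k)) := by
      apply Tendsto.add
      · apply Tendsto.smul ?_ (hw k)
        have : Tendsto (fun n => (((1-t) : ℝ) : ℂ)^n) atTop (nhds 0) := by
          apply tendsto_pow_atTop_nhds_zero_of_norm_lt_one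
          simp only [Complex.norm_real, Real.norm_eq_abs]
          exact abs_lt.mpr ⟨by linarith, h1t1⟩
        convert this using 2 with n
        push_cast
        ring
      · exact ha.mul (hw k)
    have lim2 : Tendsto (fun _ : ℕ => u k) atTop (nhds (u k)) := tendsto_const_nhds
    have : u k = (0:ℂ) • w k + a * w k := by
      apply tendsto_nhds_unique ?_ lim1
      convert lim2 using 1
      ext n
      exact (key n).symm
    rw [this, zero_smul, zero_add]
  · -- w tends to zero
    have hy0 : ∀ n, Tendsto (fun k => y n k) atTop (nhds 0) := by
      intro n
      have t1 : Tendsto (fun k => fstR (((F n)⁻¹ : (RR A)ˣ) : RR A) • u k) atTop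
          (nhds (fstR (((F n)⁻¹ : (RR A)ˣ) : RR A) • (0:A))) := hu.const_smul _
      have t2 : Tendsto (fun k => sndR (((F n)⁻¹ : (RR A)ˣ) : RR A) * u k) atTop
          (nhds (sndR (((F n)⁻¹ : (RR A)ˣ) : RR A) * 0)) :=
        ((continuous_mul_left _).tendsto 0).comp hu
      simpa using t1.add t2
    rw [NormedAddCommGroup.tendsto_nhds_zero]
    intro ε hε
    obtain ⟨n, hn⟩ := exists_pow_lt_of_lt_one (half_pos hε) (by norm_num : (2⁻¹:ℝ) < 1)
    have hev : ∀ᶠ k in atTop, ‖y n k‖ < ε/2 := by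
      have := (hy0 n).eventually (Metric.ball_mem_nhds (0:A) (half_pos hε))
      simpa [mem_ball_zero_iff] using this
    filter_upwards [hev] with k hk
    calc ‖w k‖ ≤ ‖w k - y n k‖ + ‖y n k‖ := by
          have := norm_add_le (w k - y n k) (y n k)
          simpa using this
      _ < (2⁻¹:ℝ)^n + ε/2 := by
          apply add_lt_add_of_le_of_lt ?_ hk
          rw [← dist_eq_norm, dist_comm]
          exact hwdist n k
      _ < ε/2 + ε/2 := by linarith
      _ = ε := by ring

end Main
end DDerivAux

/-- Let `A` be a Banach algebra possessing a bounded left approximate identity,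
let `d : A → A` be a derivation and let `δ : A → A` be a `d`-derivation
(`δ (x * a) = δ x * a + x * d a`).  Then `δ` is bounded iff `d` is bounded. -/
theorem d_derivation_continuous_iff_of_bounded_left_approx_identity
    {A : Type*} [NonUnitalNormedRing A] [NormedSpace ℂ A]
    [IsScalarTower ℂ A A] [SMulCommClass ℂ A A] [CompleteSpace A]
    {ι : Type*} (l : Filter ι) [l.NeBot] (e : ι → A)
    (he_bdd : ∃ C : ℝ, ∀ i, ‖e i‖ ≤ C)
    (he_approx : ∀ a : A, Filter.Tendsto (fun i => e i * a) l (nhds a))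
    (d : A →ₗ[ℂ] A) (hd : ∀ a b : A, d (a * b) = d a * b + a * d b)
    (δ : A →ₗ[ℂ] A) (hδ : ∀ x a : A, δ (x * a) = δ x * a + x * d a) :
    Continuous δ ↔ Continuous d := by
  classical
  open Filter Topology in
  obtain ⟨C₀, hC₀⟩ := he_bdd
  set C : ℝ := max C₀ 1 with hCdef
  have hC : 1 ≤ C := le_max_right _ _
  have he : ∀ i, ‖e i‖ ≤ C := fun i => le_trans (hC₀ i) (le_max_left _ _)
  set T : A →ₗ[ℂ] A := δ - d with hT
  have hTmul : ∀ x a : A, T (x * a) = T x * a := by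
    intro x a
    simp only [hT, LinearMap.sub_apply, hδ, hd, sub_mul]
    abel
  have hTcont : Continuous T := by
    apply LinearMap.continuous_of_seq_closed_graph
    intro q x y hq hTq
    have hnull : Filter.Tendsto (fun k => q k - x) Filter.atTop (nhds 0) := by
      simpa using hq.sub (tendsto_const_nhds (x := x))
    obtain ⟨a, w, hfac, hw⟩ := DDerivAux.cohen_factorization l e hC he he_approx _ hnull
    have h1 : Filter.Tendsto (fun k => T (q k - x)) Filter.atTop (nhds (y - T x)) := by
      have := hTq.sub (tendsto_const_nhds (x := T x))
      simpa [Function.comp, map_sub] using this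
    have h2 : Filter.Tendsto (fun k => T (q k - x)) Filter.atTop (nhds 0) := by
      have heq : (fun k => T (q k - x)) = fun k => T a * w k := by
        funext k
        rw [hfac k]
        exact hTmul a (w k)
      rw [heq]
      have := ((continuous_mul_left (T a)).tendsto 0).comp hw
      simpa [Function.comp_def] using this
    have h3 := tendsto_nhds_unique h1 h2
    have := sub_eq_zero.mp h3
    exact this
  constructor
  · intro hδc
    have h4 : Continuous (fun x => δ x - T x) := hδc.sub hTcont
    have h5 : (⇑d : A → A) = fun x => δ x - T x := by
      funext x
      simp [hT]
    rw [h5]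
    exact h4
  · intro hdc
    have h4 : Continuous (fun x => T x + d x) := hTcont.add hdc
    have h5 : (⇑δ : A → A) = fun x => T x + d x := by
      funext x
      simp [hT]
    rw [h5]
    exact h4
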